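/- Non-resonance of exponents (Proposition 1, case 2): Let κ > 0, let n ≥ 1, and fix indices i₁,…,i_N ∈ {1,…,n+1}. Suppose i_s = i_j = p+1 for some s < j. With h₁ = Λ₁, h_{k+1} = Λ₁ - α₁ - ⋯ - α_k in the weight lattice of A_n, the quantity η_j - η_s := (1/κ)[(h_{p+1} + h_{i_{s+1}} + ⋯ + h_{i_{j-1}}, -(e₁ - e_{p+1})) + (h_{p+1} + h_{i_{s+1}} + ⋯ + h_{i_{j-1}} - (j-s)Λ₁, Λ₁) + (j-s)] is strictly positive. -/

import Mathlib

/-- `e_k` (1-indexed, `1 ≤ k ≤ m`): `k`-th standard basis vector of `ℝᵐ`. -/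
def evec (m k : ℕ) : Fin m → ℝ := fun t => if (t : ℕ) + 1 = k then 1 else 0

/-- `h_k = Λ₁ - α₁ - ⋯ - α_{k-1} = e_k - (1/m)(e₁ + ⋯ + e_m)`; in particular
`Λ₁ = h₁`. -/
noncomputable def hvec (m k : ℕ) : Fin m → ℝ := fun t => evec m k t - 1 / m

/-- Standard inner product on `ℝᵐ`. -/
def ip (m : ℕ) (x y : Fin m → ℝ) : ℝ := ∑ t, x t * y t

lemma sum_evec (m k : ℕ) (hk1 : 1 ≤ k) (hk : k ≤ m) :
    ∑ t : Fin m, evec m k t = 1 := by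
  unfold evec
  rw [Finset.sum_eq_single (⟨k - 1, by omega⟩ : Fin m)]
  · rw [if_pos (by simp; omega)]
  · intro b _ hb
    rw [if_neg]
    intro h
    apply hb
    apply Fin.ext
    simp only []
    omega
  · intro h
    exact absurd (Finset.mem_univ _) h

lemma sum_evec_mul (m k l : ℕ) (hk1 : 1 ≤ k) (hk : k ≤ m) :
    ∑ t : Fin m, evec m k t * evec m l t = if k = l then 1 else 0 := by
  by_cases h : k = l
  · subst h
    rw [if_pos rfl]
    have he : ∀ t : Fin m, evec m k t * evec m k t = evec m k t := by
      intro t; unfold evec; split_ifs <;> ring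
    simp only [he]
    exact sum_evec m k hk1 hk
  · rw [if_neg h]
    apply Finset.sum_eq_zero
    intro t _
    unfold evec
    split_ifs with h1 h2 <;> first | omega | ring

lemma key1 (m k l : ℕ) (hm : 1 ≤ m) (hk1 : 1 ≤ k) (hk : k ≤ m)
    (hl1 : 1 ≤ l) (hl : l ≤ m) :
    ip m (hvec m k) (fun t => -(evec m 1 t - evec m l t)) =
      (if k = l then (1 : ℝ) else 0) - (if k = 1 then 1 else 0) := by
  unfold ip hvec
  have expand : ∀ t : Fin m,
      (evec m k t - 1 / m) * -(evec m 1 t - evec m l t) =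
        (evec m k t * evec m l t - evec m k t * evec m 1 t)
          - (1 / m) * evec m l t + (1 / m) * evec m 1 t := by
    intro t; ring
  simp only [expand]
  rw [Finset.sum_add_distrib, Finset.sum_sub_distrib, Finset.sum_sub_distrib,
    ← Finset.mul_sum, ← Finset.mul_sum,
    sum_evec m l hl1 hl, sum_evec m 1 le_rfl hm,
    sum_evec_mul m k l hk1 hk, sum_evec_mul m k 1 hk1 hk]
  ring

lemma key2 (m k : ℕ) (hm : 1 ≤ m) (hk1 : 1 ≤ k) (hk : k ≤ m) :
    ip m (hvec m k) (hvec m 1) = (if k = 1 then (1 : ℝ) else 0) - 1 / m := by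
  unfold ip hvec
  have expand : ∀ t : Fin m,
      (evec m k t - 1 / m) * (evec m 1 t - 1 / m) =
        evec m k t * evec m 1 t - (1 / m) * evec m k t
          - (1 / m) * evec m 1 t + (1 / m) * (1 / m) := by
    intro t; ring
  simp only [expand]
  rw [Finset.sum_add_distrib, Finset.sum_sub_distrib, Finset.sum_sub_distrib,
    ← Finset.mul_sum, ← Finset.mul_sum,
    sum_evec m k hk1 hk, sum_evec m 1 le_rfl hm,
    sum_evec_mul m k 1 hk1 hk, Finset.sum_const, Finset.card_univ,
    Fintype.card_fin, nsmul_eq_mul]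
  have hm0 : (m : ℝ) ≠ 0 := Nat.cast_ne_zero.mpr (by omega)
  field_simp
  ring

lemma ip_add_left (m : ℕ) (f g h : Fin m → ℝ) :
    ip m (fun t => f t + g t) h = ip m f h + ip m g h := by
  simp [ip, add_mul, Finset.sum_add_distrib]

lemma ip_sub_left (m : ℕ) (f g h : Fin m → ℝ) :
    ip m (fun t => f t - g t) h = ip m f h - ip m g h := by
  simp [ip, sub_mul, Finset.sum_sub_distrib]

lemma ip_smul_left (m : ℕ) (c : ℝ) (f h : Fin m → ℝ) :
    ip m (fun t => c * f t) h = c * ip m f h := by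
  simp [ip, mul_assoc, Finset.mul_sum]

lemma ip_sum_left (m : ℕ) (F : Finset ℕ) (f : ℕ → Fin m → ℝ) (h : Fin m → ℝ) :
    ip m (fun t => ∑ r ∈ F, f r t) h = ∑ r ∈ F, ip m (f r) h := by
  simp only [ip, Finset.sum_mul]
  exact Finset.sum_comm

/-- Non-resonance of exponents (Proposition 1, case 2): if `i_s = i_j = p + 1`
with `s < j`, then the quantity `η_j - η_s` is strictly positive for `κ > 0`. -/
theorem nonresonance_case2 (m n N : ℕ) (κ : ℝ) (i : ℕ → ℕ) (s j p : ℕ)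
    (hκ : 0 < κ) (hn : 1 ≤ n) (hm : n + 1 ≤ m)
    (hi : ∀ t, 1 ≤ i t ∧ i t ≤ n + 1)
    (hs : 1 ≤ s) (hsj : s < j) (hjN : j ≤ N)
    (his : i s = p + 1) (hij : i j = p + 1) :
    0 < (1 / κ) *
      (ip m (fun t => hvec m (p + 1) t + ∑ r ∈ Finset.Ico (s + 1) j, hvec m (i r) t)
          (fun t => -(evec m 1 t - evec m (p + 1) t)) +
        ip m (fun t => (hvec m (p + 1) t + ∑ r ∈ Finset.Ico (s + 1) j, hvec m (i r) t)
            - ((j : ℝ) - s) * hvec m 1 t)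
          (hvec m 1) +
        ((j : ℝ) - s)) := by
  have hm1 : 1 ≤ m := by omega
  have hpm : p + 1 ≤ m := by have := (hi s).2; omega
  have hirb : ∀ r, 1 ≤ i r ∧ i r ≤ m := fun r => ⟨(hi r).1, le_trans (hi r).2 hm⟩
  have hm0 : (m : ℝ) ≠ 0 := Nat.cast_ne_zero.mpr (by omega)
  set F := Finset.Ico (s + 1) j with hF
  have hcard : (F.card : ℝ) = (j : ℝ) - s - 1 := by
    rw [hF, Nat.card_Ico]
    have : j - (s + 1) = j - s - 1 := by omega
    rw [this, Nat.cast_sub (by omega), Nat.cast_sub (by omega)]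
    push_cast
    ring
  -- first inner product
  have hA : ip m (fun t => hvec m (p + 1) t + ∑ r ∈ F, hvec m (i r) t)
      (fun t => -(evec m 1 t - evec m (p + 1) t)) =
      ((if p + 1 = p + 1 then (1 : ℝ) else 0) - (if p + 1 = 1 then 1 else 0)) +
        ∑ r ∈ F, ((if i r = p + 1 then (1 : ℝ) else 0) - (if i r = 1 then 1 else 0)) := by
    rw [ip_add_left, ip_sum_left, key1 m (p + 1) (p + 1) hm1 (by omega) hpm (by omega) hpm]
    congr 1
    apply Finset.sum_congr rfl
    intro r _
    exact key1 m (i r) (p + 1) hm1 (hirb r).1 (hirb r).2 (by omega) hpm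
  -- second inner product
  have hB : ip m (fun t => (hvec m (p + 1) t + ∑ r ∈ F, hvec m (i r) t)
        - ((j : ℝ) - s) * hvec m 1 t) (hvec m 1) =
      (((if p + 1 = 1 then (1 : ℝ) else 0) - 1 / m) +
        ∑ r ∈ F, ((if i r = 1 then (1 : ℝ) else 0) - 1 / m)) -
        ((j : ℝ) - s) * (1 - 1 / m) := by
    rw [ip_sub_left, ip_smul_left, ip_add_left, ip_sum_left,
      key2 m (p + 1) hm1 (by omega) hpm, key2 m 1 hm1 le_rfl hm1, if_pos rfl]
    congr 2
    apply Finset.sum_congr rfl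
    intro r _
    exact key2 m (i r) hm1 (hirb r).1 (hirb r).2
  rw [hA, hB]
  rw [Finset.sum_sub_distrib, Finset.sum_sub_distrib, Finset.sum_const, nsmul_eq_mul, hcard]
  have hE : (0 : ℝ) ≤ ∑ r ∈ F, (if i r = p + 1 then (1 : ℝ) else 0) :=
    Finset.sum_nonneg fun r _ => by positivity
  have key : ((if p + 1 = p + 1 then (1 : ℝ) else 0) - (if p + 1 = 1 then 1 else 0)) +
      ((∑ r ∈ F, (if i r = p + 1 then (1:ℝ) else 0)) - ∑ r ∈ F, (if i r = 1 then (1:ℝ) else 0)) +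
      ((((if p + 1 = 1 then (1 : ℝ) else 0) - 1 / m) +
        ((∑ r ∈ F, (if i r = 1 then (1:ℝ) else 0)) - ((j : ℝ) - s - 1) * (1 / m))) -
        ((j : ℝ) - s) * (1 - 1 / m)) +
      ((j : ℝ) - s) =
      1 + ∑ r ∈ F, (if i r = p + 1 then (1:ℝ) else 0) := by
    rw [if_pos rfl]
    generalize (if p + 1 = 1 then (1:ℝ) else 0) = P
    generalize (∑ r ∈ F, (if i r = p + 1 then (1:ℝ) else 0)) = E
    generalize (∑ r ∈ F, (if i r = 1 then (1:ℝ) else 0)) = O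
    field_simp
    ring
  rw [key]
  positivity
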